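/- Let (a,b,c), (a',b',c') ∈ ℂ³ with ab ≠ 0 and a'b' ≠ 0, and suppose (a²+b²−c²)/(2ab) = (a'²+b'²−c'²)/(2a'b'). Then there exists (a'',b'',c'') ∈ ℂ³ with (a'',b'',c'') ≠ (0,0,0) such that the system (S)[(a,b,c),(a',b',c'),(a'',b'',c'')] holds. -/
import Mathlib


open Matrix Complex Finset

noncomputable section

/-- `Δ_t = (2 - t²)/2`. -/
def Del (t : ℝ) : ℝ := (2 - t ^ 2) / 2

/-- `μ_t ∈ (0, π)` is the unique angle with `cos μ_t = -Δ_t`. -/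
def mu (t : ℝ) : ℝ := Real.arccos (-(Del t))

/-- The local matrix function with parameters `(a, b, c)`. -/
def localR (a b c : ℂ) : Fin 2 → Fin 2 → Matrix (Fin 2) (Fin 2) ℂ := fun u v =>
  if u = 0 ∧ v = 0 then !![a, 0; 0, b]
  else if u = 1 ∧ v = 1 then !![b, 0; 0, a]
  else if u = 0 ∧ v = 1 then !![0, 0; c, 0]
  else !![0, c; 0, 0]

/-- The north-east matrix associated to the local matrix function with
parameters `(a, b, c)`: rows `(a,0,0,0), (0,c,b,0), (0,b,c,0), (0,0,0,a)`,
indices ordered `(0,0), (0,1), (1,0), (1,1)`. -/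
def northEast (a b c : ℂ) : Matrix (Fin 2 × Fin 2) (Fin 2 × Fin 2) ℂ := fun p q =>
  if (p = (0, 0) ∧ q = (0, 0)) ∨ (p = (1, 1) ∧ q = (1, 1)) then a
  else if (p = (0, 1) ∧ q = (0, 1)) ∨ (p = (1, 0) ∧ q = (1, 0)) then c
  else if (p = (0, 1) ∧ q = (1, 0)) ∨ (p = (1, 0) ∧ q = (0, 1)) then b
  else 0

/-- The monodromy matrix `M_N(u,v) = R(u₁,v₁) ⋯ R(u_N,v_N)`. -/
def monodromy {N : ℕ} (R : Fin 2 → Fin 2 → Matrix (Fin 2) (Fin 2) ℂ)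
    (u v : Fin N → Fin 2) : Matrix (Fin 2) (Fin 2) ℂ :=
  ((List.finRange N).map fun k => R (u k) (v k)).prod

/-- The transfer matrix of `R`: entries are traces of monodromy matrices. -/
def transfer (N : ℕ) (R : Fin 2 → Fin 2 → Matrix (Fin 2) (Fin 2) ℂ) :
    Matrix (Fin N → Fin 2) (Fin N → Fin 2) ℂ := fun u v => (monodromy R u v).trace

/-- `(R'∘R)(s,v) = Σ_u R(s,u) ⊗ R'(u,v)` (Kronecker product). -/
def comp (Rp R : Fin 2 → Fin 2 → Matrix (Fin 2) (Fin 2) ℂ) (s v : Fin 2) :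
    Matrix (Fin 2 × Fin 2) (Fin 2 × Fin 2) ℂ :=
  ∑ u : Fin 2, Matrix.kroneckerMap (· * ·) (R s u) (Rp u v)

/-- `Q` satisfies the Yang–Baxter equation with `(R, R')`. -/
def YBE (R Rp : Fin 2 → Fin 2 → Matrix (Fin 2) (Fin 2) ℂ)
    (Q : Matrix (Fin 2 × Fin 2) (Fin 2 × Fin 2) ℂ) : Prop :=
  ∀ s v : Fin 2, comp Rp R s v * Q = Q * comp R Rp s v

/-- `A_N[u,v] = M_N(u,v)[0,0]`. -/
def AmatOf {N : ℕ} (R : Fin 2 → Fin 2 → Matrix (Fin 2) (Fin 2) ℂ) :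
    Matrix (Fin N → Fin 2) (Fin N → Fin 2) ℂ := fun u v => monodromy R u v 0 0

/-- `B_N[u,v] = M_N(u,v)[1,0]`. -/
def BmatOf {N : ℕ} (R : Fin 2 → Fin 2 → Matrix (Fin 2) (Fin 2) ℂ) :
    Matrix (Fin N → Fin 2) (Fin N → Fin 2) ℂ := fun u v => monodromy R u v 1 0

/-- `D_N[u,v] = M_N(u,v)[1,1]`. -/
def DmatOf {N : ℕ} (R : Fin 2 → Fin 2 → Matrix (Fin 2) (Fin 2) ℂ) :
    Matrix (Fin N → Fin 2) (Fin N → Fin 2) ℂ := fun u v => monodromy R u v 1 1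

/-- The vacuum vector `ν_N = |0⋯0⟩`. -/
def nuVec (N : ℕ) : (Fin N → Fin 2) → ℂ := fun u => if u = (fun _ => 0) then 1 else 0

/-- The path of local matrix functions with parameters `(a(x), b(x), c(x))`. -/
def Rpath (a b c : ℂ → ℂ) (x : ℂ) : Fin 2 → Fin 2 → Matrix (Fin 2) (Fin 2) ℂ :=
  localR (a x) (b x) (c x)

/-- `λ(x,y) = a(δ(x,y))/b(δ(x,y))`. -/
def lam (a b : ℂ → ℂ) (d : ℂ → ℂ → ℂ) (x y : ℂ) : ℂ := a (d x y) / b (d x y)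

/-- `μ(x,y) = -c(δ(x,y))/b(δ(x,y))`. -/
def muc (b c : ℂ → ℂ) (d : ℂ → ℂ → ℂ) (x y : ℂ) : ℂ := -(c (d x y) / b (d x y))

/-- The abstract Yang–Baxter path setting. -/
def Setting (a b c : ℂ → ℂ) (d : ℂ → ℂ → ℂ) : Prop :=
  (∀ x, a x * b x ≠ 0) ∧
  (∀ x y, YBE (Rpath a b c x) (Rpath a b c y)
      (northEast (a (d x y)) (b (d x y)) (c (d x y)))) ∧
  (∀ x y, b (d x y) = 0 ↔ b (d y x) = 0) ∧
  (∀ x y z, d (d x y) (d x z) = d y z) ∧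
  (∀ x y, b (d x y) ≠ 0 → c (d x y) / b (d x y) = -(c (d y x) / b (d y x)))

/-- Ordered product `B_N(x₁) ⋯ B_N(x_n)`. -/
def prodB (a b c : ℂ → ℂ) (N n : ℕ) (xs : Fin n → ℂ) :
    Matrix (Fin N → Fin 2) (Fin N → Fin 2) ℂ :=
  ((List.finRange n).map fun k => BmatOf (N := N) (Rpath a b c (xs k))).prod

/-- Ordered product `∏_{k ≠ j} B_N(x_k)`. -/
def prodBex (a b c : ℂ → ℂ) (N n : ℕ) (xs : Fin n → ℂ) (j : Fin n) :
    Matrix (Fin N → Fin 2) (Fin N → Fin 2) ℂ :=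
  (((List.finRange n).filter fun k => k ≠ j).map fun k =>
    BmatOf (N := N) (Rpath a b c (xs k))).prod

/-- The coordinate Bethe ansatz vector `ψ_{t,n,N}(p₁,…,p_n)`. -/
def psiVec (t : ℝ) (n N : ℕ) (p : Fin n → ℝ) : (Fin N → Fin 2) → ℂ := fun ε =>
  if h : (Finset.univ.filter fun j => ε j = 1).card = n then
    ∑ σ : Equiv.Perm (Fin n),
      ((Equiv.Perm.sign σ : ℤ) : ℂ) *
      (∏ k : Fin n, ∏ l : Fin n,
        if k < l then
          Complex.exp (Complex.I * (p (σ k) : ℂ)) *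
            (Complex.exp (-(Complex.I * (p (σ k) : ℂ))) +
              Complex.exp (Complex.I * (p (σ l) : ℂ)) - 2 * (Del t : ℂ))
        else 1) *
      ∏ k : Fin n,
        Complex.exp (Complex.I * (p (σ k) : ℂ) *
          ((((Finset.univ.filter fun j => ε j = 1).orderIsoOfFin h k).1.val : ℂ) + 1))
  else 0

/-- `L_t(z) = 1 + t² z/(1-z)`. -/
def Lf (t : ℝ) (z : ℂ) : ℂ := 1 + (t : ℂ) ^ 2 * z / (1 - z)

/-- `M_t(z) = 1 - t²/(1-z)`. -/
def Mf (t : ℝ) (z : ℂ) : ℂ := 1 - (t : ℂ) ^ 2 / (1 - z)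

/-- `α` is an admissible parameter for `p`. -/
def Admissible (t p α : ℝ) : Prop :=
  Complex.exp (Complex.I * (p : ℂ)) =
    (Complex.exp (Complex.I * (mu t : ℂ)) - Complex.exp (α : ℂ)) /
      (Complex.exp (Complex.I * (mu t : ℂ) + (α : ℂ)) - 1)

/-- `(p₁,…,p_n)` satisfies the exponential Bethe equations for `(t,n,N)`. -/
def BetheExp (t : ℝ) (n N : ℕ) (p : Fin n → ℝ) : Prop :=
  (∀ j k : Fin n,
    Complex.exp (-(Complex.I * (p k : ℂ))) + Complex.exp (Complex.I * (p j : ℂ)) -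
      2 * (Del t : ℂ) ≠ 0) ∧
  ∀ j : Fin n, Complex.exp (Complex.I * (N : ℂ) * (p j : ℂ)) =
    (-1) ^ (n + 1) * ∏ k : Fin n,
      Complex.exp (Complex.I * ((p j : ℂ) - (p k : ℂ))) *
        (Complex.exp (-(Complex.I * (p j : ℂ))) + Complex.exp (Complex.I * (p k : ℂ)) -
          2 * (Del t : ℂ)) /
        (Complex.exp (-(Complex.I * (p k : ℂ))) + Complex.exp (Complex.I * (p j : ℂ)) -
          2 * (Del t : ℂ))

/-- `a` coefficient of the trigonometric solution: `sin(γ-x)/sin(γ/2)`. -/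
def aG (γ : ℝ) (x : ℂ) : ℂ := Complex.sin ((γ : ℂ) - x) / Complex.sin ((γ : ℂ) / 2)

/-- `b` coefficient of the trigonometric solution: `sin(x)/sin(γ/2)`. -/
def bG (γ : ℝ) (x : ℂ) : ℂ := Complex.sin x / Complex.sin ((γ : ℂ) / 2)

/-- `c` coefficient of the trigonometric solution: `sin(γ)/sin(γ/2)`. -/
def cG (γ : ℝ) : ℂ := Complex.sin (γ : ℂ) / Complex.sin ((γ : ℂ) / 2)

/-- The trigonometric local matrix function `R_γ^x`. -/
def Rg (γ : ℝ) (x : ℂ) : Fin 2 → Fin 2 → Matrix (Fin 2) (Fin 2) ℂ :=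
  localR (aG γ x) (bG γ x) (cG γ)

/-- Annihilation-type one-site matrix `[[0,0],[1,0]]`. -/
def annM : Matrix (Fin 2) (Fin 2) ℂ := !![0, 0; 1, 0]

/-- Creation-type one-site matrix `[[0,1],[0,0]]`. -/
def creM : Matrix (Fin 2) (Fin 2) ℂ := !![0, 1; 0, 0]

/-- Operator acting as `M` on the `j`-th tensor factor and as identity elsewhere. -/
def siteOp (N : ℕ) (M : Matrix (Fin 2) (Fin 2) ℂ) (j : Fin N) :
    Matrix (Fin N → Fin 2) (Fin N → Fin 2) ℂ := fun ε η =>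
  M (ε j) (η j) * ∏ i ∈ Finset.univ.erase j, (if ε i = η i then (1 : ℂ) else 0)

/-- Cyclic successor on `Fin N`. -/
def cyc {N : ℕ} (i : Fin N) : Fin N := ⟨(i.val + 1) % N, Nat.mod_lt _ i.pos⟩

/-- The diagonal part `D_t` of the Hamiltonian. -/
def diagD (t : ℝ) (N : ℕ) : Matrix (Fin N → Fin 2) (Fin N → Fin 2) ℂ := fun ε η =>
  if ε = η then
    (Del t : ℂ) * ((Finset.univ.filter fun i : Fin N => ε i = ε (cyc i)).card : ℂ)
  else 0

/-- The Heisenberg Hamiltonian `H_N(t)`. -/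
def Ham (t : ℝ) (N : ℕ) : Matrix (Fin N → Fin 2) (Fin N → Fin 2) ℂ :=
  (∑ j : Fin N,
    (siteOp N creM j * siteOp N annM (cyc j) + siteOp N annM j * siteOp N creM (cyc j))) +
  diagD t N

/-- The system (S) of equations on parameter triples. -/
def SystemS (a b c a' b' c' a'' b'' c'' : ℂ) : Prop :=
  a' * c * a'' = b' * c * b'' + c' * a * c'' ∧
  a' * b * c'' = b' * a * c'' + c * c' * b'' ∧
  c' * b * a'' = c' * a * b'' + b' * c * c''

end

theorem systemS_solvable (a b c a' b' c' : ℂ) (hab : a * b ≠ 0) (hab' : a' * b' ≠ 0)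
    (hdelta : (a ^ 2 + b ^ 2 - c ^ 2) / (2 * a * b) =
      (a' ^ 2 + b' ^ 2 - c' ^ 2) / (2 * a' * b')) :
    ∃ a'' b'' c'' : ℂ, (a'', b'', c'') ≠ (0, 0, 0) ∧
      SystemS a b c a' b' c' a'' b'' c'' := by
  have hkey : (a ^ 2 + b ^ 2 - c ^ 2) * (2 * a' * b') =
      (a' ^ 2 + b' ^ 2 - c' ^ 2) * (2 * a * b) := by
    have h2ab : (2 : ℂ) * a * b ≠ 0 := by
      rw [mul_assoc]; exact mul_ne_zero two_ne_zero hab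
    have h2ab' : (2 : ℂ) * a' * b' ≠ 0 := by
      rw [mul_assoc]; exact mul_ne_zero two_ne_zero hab'
    rw [div_eq_div_iff h2ab h2ab'] at hdelta
    linear_combination hdelta
  set M : Matrix (Fin 3) (Fin 3) ℂ :=
    !![a' * c, -(b' * c), -(c' * a);
       0, -(c * c'), a' * b - b' * a;
       c' * b, -(c' * a), -(b' * c)] with hM
  have hdet : M.det = 0 := by
    rw [hM]
    simp [Matrix.det_fin_three]
    linear_combination (-(c * c') / 2) * hkey
  obtain ⟨v, hv0, hv⟩ := (Matrix.exists_mulVec_eq_zero_iff).2 hdet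
  refine ⟨v 0, v 1, v 2, ?_, ?_, ?_, ?_⟩
  · intro h
    apply hv0
    have h0 : v 0 = 0 := congrArg Prod.fst h
    have h1 : v 1 = 0 := congrArg Prod.fst (congrArg Prod.snd h)
    have h2 : v 2 = 0 := congrArg Prod.snd (congrArg Prod.snd h)
    funext i
    fin_cases i <;> assumption
  · have := congrFun hv 0
    simp [hM, Matrix.mulVec, dotProduct, Fin.sum_univ_three] at this
    linear_combination this
  · have := congrFun hv 1
    simp [hM, Matrix.mulVec, dotProduct, Fin.sum_univ_three] at this
    linear_combination this
  · have := congrFun hv 2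
    simp [hM, Matrix.mulVec, dotProduct, Fin.sum_univ_three] at this
    linear_combination this
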